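/- For every real number x, ∑_{k=0}^∞ a_{2k} · x^{2k}/(2k)! = (1/2) ∫₀^∞ (g(x·t)³ + g(−x·t)³) · e^{−t} dt. -/

import Mathlib

open MeasureTheory Real

/-- `a k` is the sum of squared multinomial coefficients over all triples
`(k₁,k₂,k₃)` of natural numbers with `k₁+k₂+k₃ = k`. -/
def a (k : ℕ) : ℕ :=
  ∑ p ∈ Finset.Nat.antidiagonalTuple 3 k, (Nat.multinomial Finset.univ p) ^ 2

/-- The entire function `g(y) = ∑ y^k/(k!)²`, so that `g(y) = I₀(2√y)` for `y ≥ 0`. -/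
noncomputable def g (y : ℝ) : ℝ := ∑' k : ℕ, y ^ k / ((Nat.factorial k : ℝ)) ^ 2

section Aux
open Finset

lemma summable_norm_f (y : ℝ) :
    Summable (fun k : ℕ => ‖y ^ k / ((Nat.factorial k : ℝ)) ^ 2‖) := by
  refine Summable.of_nonneg_of_le (fun k => norm_nonneg _) (fun k => ?_)
    (Real.summable_pow_div_factorial |y|)
  have h1 : (1:ℝ) ≤ (Nat.factorial k : ℝ) := by exact_mod_cast (Nat.factorial_pos k)
  have h2 : (Nat.factorial k : ℝ) ≤ ((Nat.factorial k : ℝ)) ^ 2 := le_self_pow₀ h1 two_ne_zero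
  rw [norm_div, norm_pow, norm_pow, Real.norm_eq_abs, Real.norm_eq_abs,
    abs_of_nonneg (show (0:ℝ) ≤ (Nat.factorial k : ℝ) by positivity)]
  gcongr

lemma sum_antidiagonalTuple_succ {M : Type*} [AddCommMonoid M] (k n : ℕ)
    (F : (Fin (k+1) → ℕ) → M) :
    ∑ p ∈ Finset.Nat.antidiagonalTuple (k+1) n, F p
      = ∑ ij ∈ Finset.HasAntidiagonal.antidiagonal n,
          ∑ q ∈ Finset.Nat.antidiagonalTuple k ij.2, F (Fin.cons ij.1 q) := by
  rw [Finset.sum_sigma']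
  refine Finset.sum_nbij'
    (fun p => (⟨(p 0, ∑ i : Fin k, p i.succ), Fin.tail p⟩ : (_ : ℕ × ℕ) × (Fin k → ℕ)))
    (fun q => Fin.cons q.1.1 q.2) ?_ ?_ ?_ ?_ ?_
  · intro p hp
    rw [Finset.Nat.mem_antidiagonalTuple] at hp
    rw [Finset.mem_sigma, Finset.HasAntidiagonal.mem_antidiagonal]
    constructor
    · rw [← hp, Fin.sum_univ_succ]
    · rw [Finset.Nat.mem_antidiagonalTuple]; rfl
  · rintro ⟨⟨i, m⟩, q⟩ hq
    rw [Finset.mem_sigma, Finset.HasAntidiagonal.mem_antidiagonal, Finset.Nat.mem_antidiagonalTuple] at hq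
    rw [Finset.Nat.mem_antidiagonalTuple, Fin.sum_cons, hq.2, hq.1]
  · intro p hp
    exact Fin.cons_self_tail p
  · rintro ⟨⟨i, m⟩, q⟩ hq
    rw [Finset.mem_sigma, Finset.HasAntidiagonal.mem_antidiagonal, Finset.Nat.mem_antidiagonalTuple] at hq
    refine Sigma.ext ?_ ?_
    · simp only [Fin.cons_zero, Fin.cons_succ]
      exact Prod.ext rfl hq.2
    · simp [Fin.tail_cons]
  · intro p hp
    rw [Fin.cons_self_tail]

lemma hasSum_cube (y : ℝ) :
    HasSum (fun n : ℕ => ∑ p ∈ Finset.Nat.antidiagonalTuple 3 n,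
        ∏ i, y ^ (p i) / ((Nat.factorial (p i) : ℝ)) ^ 2) (g y ^ 3) := by
  set f : ℕ → ℝ := fun k => y ^ k / ((Nat.factorial k : ℝ)) ^ 2 with hf
  have hfn : Summable fun k => ‖f k‖ := summable_norm_f y
  set b : ℕ → ℝ := fun n => ∑ kl ∈ Finset.HasAntidiagonal.antidiagonal n, f kl.1 * f kl.2 with hb
  have hb2 : g y * g y = ∑' n, b n :=
    tsum_mul_tsum_eq_tsum_sum_antidiagonal_of_summable_norm hfn hfn
  have hbn : Summable fun n => ‖b n‖ :=
    summable_norm_sum_mul_antidiagonal_of_summable_norm hfn hfn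
  have h3 : g y ^ 3 = ∑' n, ∑ kl ∈ Finset.HasAntidiagonal.antidiagonal n, f kl.1 * b kl.2 := by
    have : g y ^ 3 = g y * (g y * g y) := by ring
    rw [this, hb2]
    exact tsum_mul_tsum_eq_tsum_sum_antidiagonal_of_summable_norm hfn hbn
  have hc' : Summable fun n => ∑ kl ∈ Finset.HasAntidiagonal.antidiagonal n, f kl.1 * b kl.2 :=
    (summable_norm_sum_mul_antidiagonal_of_summable_norm hfn hbn).of_norm
  have key : ∀ n : ℕ, ∑ p ∈ Finset.Nat.antidiagonalTuple 3 n, ∏ i, f (p i)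
      = ∑ kl ∈ Finset.HasAntidiagonal.antidiagonal n, f kl.1 * b kl.2 := by
    intro n
    rw [sum_antidiagonalTuple_succ]
    refine Finset.sum_congr rfl fun ij _ => ?_
    rw [sum_antidiagonalTuple_succ, Finset.mul_sum]
    refine Finset.sum_congr rfl fun kl _ => ?_
    rw [Finset.sum_congr rfl (fun q hq => rfl)]
    simp only [Finset.Nat.antidiagonalTuple_one, Finset.sum_singleton]
    rw [Fin.prod_univ_three]
    have e0 : (Fin.cons ij.1 (Fin.cons kl.1 ![kl.2]) : Fin 3 → ℕ) 0 = ij.1 := rfl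
    have e1 : (Fin.cons ij.1 (Fin.cons kl.1 ![kl.2]) : Fin 3 → ℕ) 1 = kl.1 := rfl
    have e2 : (Fin.cons ij.1 (Fin.cons kl.1 ![kl.2]) : Fin 3 → ℕ) 2 = kl.2 := rfl
    rw [e0, e1, e2]
    ring
  have := hc'.hasSum
  rw [← h3] at this
  exact this.congr_fun fun n => (key n)

lemma hasSum_coeff (y : ℝ) :
    HasSum (fun n : ℕ => (a n : ℝ) / ((Nat.factorial n : ℝ)) ^ 2 * y ^ n) (g y ^ 3) := by
  refine (hasSum_cube y).congr_fun fun n => ?_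
  have key : ∀ p ∈ Finset.Nat.antidiagonalTuple 3 n,
      ∏ i, y ^ (p i) / ((Nat.factorial (p i) : ℝ)) ^ 2
        = (Nat.multinomial Finset.univ p : ℝ) ^ 2 / ((Nat.factorial n : ℝ)) ^ 2 * y ^ n := by
    intro p hp
    have hsum : ∑ i, p i = n := (Finset.Nat.mem_antidiagonalTuple).1 hp
    have hfact : ((Nat.factorial n : ℕ) : ℝ)
        = (∏ i, ((Nat.factorial (p i) : ℕ) : ℝ)) * (Nat.multinomial Finset.univ p : ℝ) := by
      rw [← Nat.cast_prod, ← Nat.cast_mul, Nat.multinomial_spec, hsum]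
    have hP : (0:ℝ) < ∏ i, ((Nat.factorial (p i) : ℕ) : ℝ) := by positivity
    have hm : (0:ℝ) < (Nat.multinomial Finset.univ p : ℝ) := by
      exact_mod_cast Nat.multinomial_pos _ _
    rw [Finset.prod_div_distrib, Finset.prod_pow_eq_pow_sum, hsum, hfact, Finset.prod_pow]
    field_simp
  rw [Finset.sum_congr rfl key, ← Finset.sum_mul, ← Finset.sum_div, a]
  push_cast
  ring

lemma a_le (k : ℕ) : a k ≤ 9 ^ k := by
  have hT : Finset.Nat.antidiagonalTuple 3 k = Finset.piAntidiag Finset.univ k := by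
    ext p
    simp [Finset.Nat.mem_antidiagonalTuple, Finset.mem_piAntidiag]
  have hsum3 : ∑ p ∈ Finset.Nat.antidiagonalTuple 3 k, Nat.multinomial Finset.univ p = 3 ^ k := by
    have h := Finset.sum_pow_eq_sum_piAntidiag (Finset.univ : Finset (Fin 3)) (fun _ => (1:ℕ)) k
    simp only [Finset.sum_const, Finset.card_univ, Fintype.card_fin, smul_eq_mul, mul_one,
      one_pow, Finset.prod_const_one, Nat.cast_id] at h
    rw [hT, ← h]
  have hle : ∀ p ∈ Finset.Nat.antidiagonalTuple 3 k, Nat.multinomial Finset.univ p ≤ 3 ^ k := by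
    intro p hp
    rw [← hsum3]
    exact Finset.single_le_sum (fun q _ => Nat.zero_le _) hp
  calc a k = ∑ p ∈ Finset.Nat.antidiagonalTuple 3 k, (Nat.multinomial Finset.univ p) ^ 2 := rfl
    _ ≤ ∑ p ∈ Finset.Nat.antidiagonalTuple 3 k, 3 ^ k * Nat.multinomial Finset.univ p := by
        refine Finset.sum_le_sum fun p hp => ?_
        rw [pow_two]
        exact Nat.mul_le_mul_right _ (hle p hp)
    _ = 3 ^ k * 3 ^ k := by rw [← Finset.mul_sum, hsum3]
    _ = 9 ^ k := by norm_num [← mul_pow]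

lemma integrableOn_pow_exp (k : ℕ) :
    IntegrableOn (fun t : ℝ => t ^ k * Real.exp (-t)) (Set.Ioi 0) := by
  have h := Real.GammaIntegral_convergent (s := (k:ℝ) + 1) (by positivity)
  refine h.congr_fun ?_ measurableSet_Ioi
  intro t ht
  show Real.exp (-t) * t ^ ((k:ℝ) + 1 - 1) = t ^ k * Real.exp (-t)
  rw [add_sub_cancel_right, Real.rpow_natCast, mul_comm]

lemma integral_pow_exp (k : ℕ) :
    ∫ t in Set.Ioi (0:ℝ), t ^ k * Real.exp (-t) = (Nat.factorial k : ℝ) := by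
  have h := Real.Gamma_eq_integral (s := (k:ℝ) + 1) (by positivity)
  rw [Real.Gamma_nat_eq_factorial] at h
  rw [h]
  refine setIntegral_congr_fun measurableSet_Ioi fun t ht => ?_
  show t ^ k * Real.exp (-t) = Real.exp (-t) * t ^ ((k:ℝ) + 1 - 1)
  rw [add_sub_cancel_right, Real.rpow_natCast, mul_comm]

end Aux

/-- Even-index exponential generating function of `a`. -/
theorem egf_a_even_eq_integral (x : ℝ) :
    HasSum (fun k : ℕ => (a (2 * k) : ℝ) * x ^ (2 * k) / (Nat.factorial (2 * k) : ℝ))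
      ((1 / 2) * ∫ t in Set.Ioi (0:ℝ),
        (g (x * t) ^ 3 + g (-(x * t)) ^ 3) * Real.exp (-t)) := by
  set μ := volume.restrict (Set.Ioi (0:ℝ)) with hμ
  set F : ℕ → ℝ → ℝ := fun k t =>
    (a k : ℝ) / ((Nat.factorial k : ℝ)) ^ 2 * ((x * t) ^ k + (-(x * t)) ^ k) * Real.exp (-t)
    with hF
  set d : ℕ → ℝ := fun k => (a k : ℝ) * (x ^ k + (-x) ^ k) / (Nat.factorial k : ℝ) with hd
  have hFeq : ∀ k t, F k t
      = ((a k : ℝ) / ((Nat.factorial k : ℝ)) ^ 2 * (x ^ k + (-x) ^ k))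
          * (t ^ k * Real.exp (-t)) := by
    intro k t
    simp only [hF]
    have h : (-(x * t)) = (-x) * t := by ring
    rw [h, mul_pow, mul_pow]
    ring
  have hC : ∀ k : ℕ, (0:ℝ) ≤ x ^ k + (-x) ^ k := by
    intro k
    rcases Nat.even_or_odd k with he | ho
    · rw [he.neg_pow]
      have := he.pow_nonneg x
      linarith
    · rw [ho.neg_pow]; simp
  have h_int : ∀ k, Integrable (F k) μ := by
    intro k
    have h1 := (integrableOn_pow_exp k).const_mul
      ((a k : ℝ) / ((Nat.factorial k : ℝ)) ^ 2 * (x ^ k + (-x) ^ k))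
    exact h1.congr (ae_of_all _ (fun t => (hFeq k t).symm))
  have hInt_eq : ∀ k, ∫ t, F k t ∂μ = d k := by
    intro k
    rw [MeasureTheory.integral_congr_ae (ae_of_all _ (hFeq k))]
    rw [MeasureTheory.integral_const_mul]
    rw [hμ]
    rw [integral_pow_exp k]
    have h3 : (Nat.factorial k : ℝ) ≠ 0 := by positivity
    simp only [hd]
    field_simp
  have hnorm_eq : ∀ k, ∫ t, ‖F k t‖ ∂μ = d k := by
    intro k
    rw [← hInt_eq k]
    refine integral_congr_ae ?_
    filter_upwards [ae_restrict_mem measurableSet_Ioi] with t ht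
    rw [Real.norm_eq_abs, abs_of_nonneg]
    rw [hFeq]
    exact mul_nonneg (mul_nonneg (by positivity) (hC k))
      (mul_nonneg (pow_nonneg (le_of_lt ht) k) (Real.exp_pos _).le)
  have hd_sum : Summable d := by
    refine Summable.of_norm_bounded (g := fun k => 2 * ((9 * |x|) ^ k / (Nat.factorial k : ℝ)))
      ((Real.summable_pow_div_factorial (9 * |x|)).mul_left 2) ?_
    intro k
    have h1 : |x ^ k + (-x) ^ k| ≤ 2 * |x| ^ k := by
      calc |x ^ k + (-x) ^ k| ≤ |x ^ k| + |(-x) ^ k| := abs_add_le _ _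
        _ = |x| ^ k + |x| ^ k := by rw [abs_pow, abs_pow, abs_neg]
        _ = 2 * |x| ^ k := by ring
    have h2 : (a k : ℝ) ≤ 9 ^ k := by exact_mod_cast a_le k
    have h3 : (0:ℝ) < (Nat.factorial k : ℝ) := by positivity
    calc ‖d k‖ = (a k : ℝ) * |x ^ k + (-x) ^ k| / (Nat.factorial k : ℝ) := by
          rw [hd, Real.norm_eq_abs, abs_div, abs_mul, Nat.abs_cast, abs_of_pos h3]
      _ ≤ (9:ℝ) ^ k * (2 * |x| ^ k) / (Nat.factorial k : ℝ) := by
          exact (div_le_div_iff_of_pos_right h3).2 ((mul_le_mul h2 h1 (abs_nonneg _) (by positivity)))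
      _ = 2 * ((9 * |x|) ^ k / (Nat.factorial k : ℝ)) := by rw [mul_pow]; ring
  have key := MeasureTheory.hasSum_integral_of_summable_integral_norm (μ := μ) h_int
    (hd_sum.congr fun k => (hnorm_eq k).symm)
  have hptw : ∀ t : ℝ, ∑' k, F k t = (g (x*t) ^ 3 + g (-(x*t)) ^ 3) * Real.exp (-t) := by
    intro t
    have h1 := hasSum_coeff (x * t)
    have h2 := hasSum_coeff (-(x * t))
    have h3 := (h1.add h2).mul_right (Real.exp (-t))
    exact ((h3.congr_fun fun n => by simp only [hF]; ring)).tsum_eq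
  have hIeq : (∫ t, ∑' k, F k t ∂μ)
      = ∫ t in Set.Ioi (0:ℝ), (g (x*t) ^ 3 + g (-(x*t)) ^ 3) * Real.exp (-t) := by
    rw [hμ]
    exact integral_congr_ae (ae_of_all _ fun t => hptw t)
  rw [hIeq] at key
  have key' : HasSum d (∫ t in Set.Ioi (0:ℝ),
      (g (x*t) ^ 3 + g (-(x*t)) ^ 3) * Real.exp (-t)) :=
    key.congr_fun fun k => (hInt_eq k).symm
  have hinj : Function.Injective (fun m : ℕ => 2 * m) := fun m n h => by simpa using h
  have hzero : ∀ k ∉ Set.range (fun m : ℕ => 2 * m), d k = 0 := by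
    intro k hk
    have hodd : Odd k := by
      rcases Nat.even_or_odd k with he | ho
      · obtain ⟨r, hr⟩ := he
        exact absurd ⟨r, by simp; omega⟩ hk
      · exact ho
    simp only [hd]
    rw [hodd.neg_pow]
    ring
  have heven := (Function.Injective.hasSum_iff hinj hzero).2 key'
  have final := heven.mul_left (1/2 : ℝ)
  refine final.congr_fun fun m => ?_
  simp only [hd, Function.comp]
  rw [(even_two_mul m).neg_pow]
  ring
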